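/- Let μ be a σ-finite measure on a measurable space X, let (Θ, 𝒜, ρ) be a probability space, and let G : Θ × X → ℝ be a nonnegative measurable function (with respect to the product σ-algebra) with ∫_X G(θ, x) dμ(x) = 1 for every θ ∈ Θ. Let g₀ be a density with respect to μ and ĝ(x) := ∫_Θ G(θ, x) dρ(θ). Then for every ε > 0, d_H²(g₀, ĝ) ≤ ε² + 2·ρ({θ ∈ Θ : d_H²(g₀, G(θ, ·)) > ε²}). -/

import Mathlib

open MeasureTheory

private lemma hellinger_ptwise (a b : ℝ) (ha : 0 ≤ a) (hb : 0 ≤ b) :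
    ENNReal.ofReal ((Real.sqrt a - Real.sqrt b) ^ 2)
      + ENNReal.ofReal (2 * (Real.sqrt a * Real.sqrt b))
      = ENNReal.ofReal a + ENNReal.ofReal b := by
  rw [← ENNReal.ofReal_add (by positivity) (by positivity), ← ENNReal.ofReal_add ha hb]
  congr 1
  have h1 := Real.sq_sqrt ha
  have h2 := Real.sq_sqrt hb
  nlinarith [Real.sqrt_nonneg a, Real.sqrt_nonneg b]

/-- Deterministic form of inequality (5.12): the Hellinger risk of the Bayes
estimator `gB(x) = ∫ G(θ, x) dρ(θ)` is bounded by `ε²` plus twice the posterior mass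
outside the Hellinger ball of radius `ε`. -/
theorem hellinger_sq_mixture_le_eps_add_mass {X Θ : Type*}
    [MeasurableSpace X] [MeasurableSpace Θ]
    (μ : Measure X) [SigmaFinite μ] (ρ : Measure Θ) [IsProbabilityMeasure ρ]
    (G : Θ → X → ℝ) (hGm : Measurable (Function.uncurry G))
    (hG0 : ∀ θ x, 0 ≤ G θ x) (hG1 : ∀ θ, ∫ x, G θ x ∂μ = 1)
    (g₀ : X → ℝ) (hg₀m : Measurable g₀) (hg₀0 : ∀ x, 0 ≤ g₀ x)
    (hg₀1 : ∫ x, g₀ x ∂μ = 1)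
    (ε : ℝ) (hε : 0 < ε) :
    ∫⁻ x, ENNReal.ofReal ((Real.sqrt (g₀ x) - Real.sqrt (∫ θ, G θ x ∂ρ)) ^ 2) ∂μ
      ≤ ENNReal.ofReal (ε ^ 2)
        + 2 * ρ {θ | ENNReal.ofReal (ε ^ 2)
            < ∫⁻ x, ENNReal.ofReal ((Real.sqrt (g₀ x) - Real.sqrt (G θ x)) ^ 2) ∂μ} := by
  classical
  set gB : X → ℝ := fun x => ∫ θ, G θ x ∂ρ with hgBdef
  -- measurability facts
  have hFm : Measurable fun p : Θ × X => ENNReal.ofReal (G p.1 p.2) :=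
    ENNReal.measurable_ofReal.comp hGm
  have hFm' : Measurable fun p : X × Θ => ENNReal.ofReal (G p.2 p.1) :=
    hFm.comp measurable_swap
  have hGBm : Measurable fun x => ∫⁻ θ, ENNReal.ofReal (G θ x) ∂ρ :=
    Measurable.lintegral_prod_right' hFm'
  have hgBm : Measurable gB := by
    have : StronglyMeasurable fun p : X × Θ => G p.2 p.1 :=
      (hGm.comp measurable_swap).stronglyMeasurable
    exact this.integral_prod_right'.measurable
  have hgB0 : ∀ x, 0 ≤ gB x := fun x => integral_nonneg fun θ => hG0 θ x
  -- basic lintegral identities for densities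
  have hg₀i : Integrable g₀ μ := by
    by_contra h
    rw [integral_undef h] at hg₀1; norm_num at hg₀1
  have hg₀l : ∫⁻ x, ENNReal.ofReal (g₀ x) ∂μ = 1 := by
    rw [← ofReal_integral_eq_lintegral_ofReal hg₀i (Filter.Eventually.of_forall hg₀0), hg₀1,
      ENNReal.ofReal_one]
  have hGθm : ∀ θ, Measurable (G θ) := fun θ => hGm.of_uncurry_left
  have hGθi : ∀ θ, Integrable (G θ) μ := by
    intro θ
    by_contra h
    have h1 := hG1 θ
    rw [integral_undef h] at h1
    norm_num at h1
  have hGθl : ∀ θ, ∫⁻ x, ENNReal.ofReal (G θ x) ∂μ = 1 := by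
    intro θ
    rw [← ofReal_integral_eq_lintegral_ofReal (hGθi θ)
      (Filter.Eventually.of_forall (hG0 θ)), hG1, ENNReal.ofReal_one]
  -- Tonelli
  have hton : ∫⁻ x, ∫⁻ θ, ENNReal.ofReal (G θ x) ∂ρ ∂μ = 1 := by
    rw [lintegral_lintegral_swap hFm'.aemeasurable]
    simp [hGθl]
  -- a.e. x, the θ-section is integrable and ofReal (gB x) agrees with the lintegral
  have hfin : ∀ᵐ x ∂μ, (∫⁻ θ, ENNReal.ofReal (G θ x) ∂ρ) < ⊤ :=
    ae_lt_top hGBm (by rw [hton]; exact ENNReal.one_ne_top)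
  have haeq : ∀ᵐ x ∂μ, ENNReal.ofReal (gB x) = ∫⁻ θ, ENNReal.ofReal (G θ x) ∂ρ := by
    filter_upwards [hfin] with x hx
    have hmθ : Measurable fun θ => G θ x := hGm.of_uncurry_right
    have hint : Integrable (fun θ => G θ x) ρ := by
      refine ⟨hmθ.aestronglyMeasurable, ?_⟩
      rw [hasFiniteIntegral_iff_ofReal (Filter.Eventually.of_forall fun θ => hG0 θ x)]
      exact hx
    rw [hgBdef]
    exact ofReal_integral_eq_lintegral_ofReal hint
      (Filter.Eventually.of_forall fun θ => hG0 θ x)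
  -- the "bracket" identity: Hellinger part + affinity part = 2, for any density h
  have key : ∀ h : X → ℝ, Measurable h → (∀ x, 0 ≤ h x) →
      (∫⁻ x, ENNReal.ofReal (h x) ∂μ = 1) →
      (∫⁻ x, ENNReal.ofReal ((Real.sqrt (g₀ x) - Real.sqrt (h x)) ^ 2) ∂μ)
        + (∫⁻ x, ENNReal.ofReal (2 * (Real.sqrt (g₀ x) * Real.sqrt (h x))) ∂μ) = 2 := by
    intro h hm h0 h1
    have hm1 : Measurable fun x =>
        ENNReal.ofReal ((Real.sqrt (g₀ x) - Real.sqrt (h x)) ^ 2) :=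
      ((hg₀m.sqrt.sub hm.sqrt).pow_const 2).ennreal_ofReal
    rw [← lintegral_add_left hm1]
    have : ∀ x, ENNReal.ofReal ((Real.sqrt (g₀ x) - Real.sqrt (h x)) ^ 2)
        + ENNReal.ofReal (2 * (Real.sqrt (g₀ x) * Real.sqrt (h x)))
        = ENNReal.ofReal (g₀ x) + ENNReal.ofReal (h x) :=
      fun x => hellinger_ptwise _ _ (hg₀0 x) (h0 x)
    rw [lintegral_congr this, lintegral_add_left hg₀m.ennreal_ofReal, hg₀l, h1]
    norm_num
  -- gB is a density in this sense
  have hgBl : ∫⁻ x, ENNReal.ofReal (gB x) ∂μ = 1 := by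
    rw [lintegral_congr_ae haeq]; exact hton
  have keygB := key gB hgBm hgB0 hgBl
  -- target notation
  set T : ENNReal :=
    ∫⁻ x, ENNReal.ofReal ((Real.sqrt (g₀ x) - Real.sqrt (gB x)) ^ 2) ∂μ with hT
  set BgB : ENNReal :=
    ∫⁻ x, ENNReal.ofReal (2 * (Real.sqrt (g₀ x) * Real.sqrt (gB x))) ∂μ with hBgB
  have hT2 : T + BgB = 2 := keygB
  have hBgBtop : BgB ≠ ⊤ := by
    intro h
    rw [h, add_top] at hT2
    exact ENNReal.ofNat_ne_top hT2.symm
  -- trivial case: ε² ≥ 2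
  by_cases h2 : (2 : ℝ) ≤ ε ^ 2
  · have hT_le : T ≤ 2 := le_of_le_of_eq le_self_add hT2
    calc T ≤ 2 := hT_le
      _ ≤ ENNReal.ofReal (ε ^ 2) := by
          rw [show (2 : ENNReal) = ENNReal.ofReal 2 by norm_num]
          exact ENNReal.ofReal_le_ofReal h2
      _ ≤ _ := le_self_add
  push_neg at h2
  -- main case
  set D : Θ → ENNReal := fun θ =>
    ∫⁻ x, ENNReal.ofReal ((Real.sqrt (g₀ x) - Real.sqrt (G θ x)) ^ 2) ∂μ with hD
  set S : Set Θ := {θ | ENNReal.ofReal (ε ^ 2) < D θ} with hS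
  have hDm : Measurable D := by
    apply Measurable.lintegral_prod_right'
      (f := fun p : Θ × X => ENNReal.ofReal ((Real.sqrt (g₀ p.2) - Real.sqrt (G p.1 p.2)) ^ 2))
    exact (((hg₀m.comp measurable_snd).sqrt.sub hGm.sqrt).pow_const 2).ennreal_ofReal
  have hSmeas : MeasurableSet S := measurableSet_lt measurable_const hDm
  set c : ENNReal := ENNReal.ofReal (2 - ε ^ 2) with hc
  have hεc : ENNReal.ofReal (ε ^ 2) + c = 2 := by
    rw [hc, ← ENNReal.ofReal_add (by positivity) (by linarith)]
    norm_num
  have hc2 : c ≤ 2 := by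
    rw [show (2 : ENNReal) = ENNReal.ofReal 2 by norm_num]
    exact ENNReal.ofReal_le_ofReal (by nlinarith)
  -- affinity per θ
  set B : Θ → ENNReal := fun θ =>
    ∫⁻ x, ENNReal.ofReal (2 * (Real.sqrt (g₀ x) * Real.sqrt (G θ x))) ∂μ with hB
  have hkeyθ : ∀ θ, D θ + B θ = 2 := fun θ => key (G θ) (hGθm θ) (hG0 θ) (hGθl θ)
  have hBc : ∀ θ ∉ S, c ≤ B θ := by
    intro θ hθ
    have hθ' : D θ ≤ ENNReal.ofReal (ε ^ 2) := not_lt.mp hθ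
    have : ENNReal.ofReal (ε ^ 2) + c ≤ ENNReal.ofReal (ε ^ 2) + B θ := by
      rw [hεc, ← hkeyθ θ]
      exact add_le_add_left hθ' _
    exact (ENNReal.add_le_add_iff_left ENNReal.ofReal_ne_top).mp this
  have hBmθ : Measurable B := by
    apply Measurable.lintegral_prod_right'
      (f := fun p : Θ × X =>
        ENNReal.ofReal (2 * (Real.sqrt (g₀ p.2) * Real.sqrt (G p.1 p.2))))
    exact ((measurable_const.mul ((hg₀m.comp measurable_snd).sqrt.mul
      hGm.sqrt))).ennreal_ofReal
  -- Jensen: ∫ B dρ ≤ BgB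
  have hJensen : ∫⁻ θ, B θ ∂ρ ≤ BgB := by
    have hswap : ∫⁻ θ, B θ ∂ρ
        = ∫⁻ x, ∫⁻ θ, ENNReal.ofReal (2 * (Real.sqrt (g₀ x) * Real.sqrt (G θ x))) ∂ρ ∂μ := by
      rw [hB]
      refine (lintegral_lintegral_swap ?_).symm
      exact (((measurable_const.mul ((hg₀m.comp measurable_snd).sqrt.mul
        hGm.sqrt))).ennreal_ofReal.comp measurable_swap).aemeasurable
    rw [hswap, hBgB]
    refine lintegral_mono_ae ?_
    filter_upwards [haeq] with x hx
    -- pointwise Jensen at x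
    have hsplit : ∀ θ, ENNReal.ofReal (2 * (Real.sqrt (g₀ x) * Real.sqrt (G θ x)))
        = (ENNReal.ofReal (2 * Real.sqrt (g₀ x))) * ENNReal.ofReal (Real.sqrt (G θ x)) := by
      intro θ
      rw [← ENNReal.ofReal_mul (by positivity)]
      ring_nf
    have hmθ : Measurable fun θ => ENNReal.ofReal (Real.sqrt (G θ x)) :=
      (Measurable.sqrt (hGm.of_uncurry_right)).ennreal_ofReal
    calc ∫⁻ θ, ENNReal.ofReal (2 * (Real.sqrt (g₀ x) * Real.sqrt (G θ x))) ∂ρ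
        = (ENNReal.ofReal (2 * Real.sqrt (g₀ x)))
            * ∫⁻ θ, ENNReal.ofReal (Real.sqrt (G θ x)) ∂ρ := by
          simp_rw [hsplit]
          exact lintegral_const_mul' _ _ ENNReal.ofReal_ne_top
      _ ≤ (ENNReal.ofReal (2 * Real.sqrt (g₀ x)))
            * ENNReal.ofReal (Real.sqrt (gB x)) := by
          refine mul_le_mul_right ?_ _
          -- Cauchy–Schwarz step
          have hCS := ENNReal.lintegral_mul_le_Lp_mul_Lq ρ
            (p := 2) (q := 2) Real.HolderConjugate.two_two
            (f := fun θ => (ENNReal.ofReal (G θ x)) ^ ((1 : ℝ)/2))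
            (g := fun _ => 1)
            ((hGm.of_uncurry_right.ennreal_ofReal.pow_const _).aemeasurable)
            aemeasurable_const
          simp only [Pi.mul_apply, mul_one, ENNReal.one_rpow, lintegral_const, measure_univ,
            one_mul] at hCS
          have hpow : ∀ θ, ((ENNReal.ofReal (G θ x)) ^ ((1 : ℝ)/2)) ^ (2 : ℝ)
              = ENNReal.ofReal (G θ x) := by
            intro θ
            rw [← ENNReal.rpow_mul]
            norm_num
          simp_rw [hpow] at hCS
          calc ∫⁻ θ, ENNReal.ofReal (Real.sqrt (G θ x)) ∂ρ
              = ∫⁻ θ, (ENNReal.ofReal (G θ x)) ^ ((1 : ℝ)/2) ∂ρ := by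
                refine lintegral_congr fun θ => ?_
                rw [Real.sqrt_eq_rpow,
                  ENNReal.ofReal_rpow_of_nonneg (hG0 θ x) (by norm_num)]
            _ ≤ (∫⁻ θ, ENNReal.ofReal (G θ x) ∂ρ) ^ ((1 : ℝ)/2) := hCS
            _ = (ENNReal.ofReal (gB x)) ^ ((1 : ℝ)/2) := by rw [hx]
            _ = ENNReal.ofReal (Real.sqrt (gB x)) := by
                rw [Real.sqrt_eq_rpow,
                  ENNReal.ofReal_rpow_of_nonneg (hgB0 x) (by norm_num)]
      _ = ENNReal.ofReal (2 * (Real.sqrt (g₀ x) * Real.sqrt (gB x))) := by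
          rw [← ENNReal.ofReal_mul (by positivity)]
          ring_nf
  -- lower bound ∫ B dρ by c · ρ Sᶜ
  have hlow : c * ρ Sᶜ ≤ ∫⁻ θ, B θ ∂ρ := by
    calc c * ρ Sᶜ = ∫⁻ θ in Sᶜ, c ∂ρ := by rw [setLIntegral_const]
      _ ≤ ∫⁻ θ in Sᶜ, B θ ∂ρ := setLIntegral_mono hBmθ (fun θ hθ => hBc θ hθ)
      _ ≤ ∫⁻ θ, B θ ∂ρ := setLIntegral_le_lintegral _ _
  have hBgBlow : c * ρ Sᶜ ≤ BgB := hlow.trans hJensen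
  -- final arithmetic
  have hfinal : T + BgB ≤ (ENNReal.ofReal (ε ^ 2) + 2 * ρ S) + BgB := by
    rw [hT2]
    calc (2 : ENNReal) = ENNReal.ofReal (ε ^ 2) + c := hεc.symm
      _ = ENNReal.ofReal (ε ^ 2) + c * (ρ S + ρ Sᶜ) := by
          rw [measure_add_measure_compl hSmeas, measure_univ, mul_one]
      _ = ENNReal.ofReal (ε ^ 2) + (c * ρ S + c * ρ Sᶜ) := by rw [mul_add]
      _ ≤ ENNReal.ofReal (ε ^ 2) + (2 * ρ S + BgB) := by
          gcongr
      _ = (ENNReal.ofReal (ε ^ 2) + 2 * ρ S) + BgB := by ring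
  exact (ENNReal.add_le_add_iff_right hBgBtop).mp hfinal
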